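/- Let Z ⊆ ℝⁿ be nonempty, compact and convex; let f : ℝⁿ → ℝ be differentiable with ∇f c-strongly monotone (⟨∇f(x) − ∇f(y), x − y⟩ ≥ c‖x − y‖² for all x, y ∈ ℝⁿ, c > 0) and L-Lipschitz on ℝⁿ; let g(z) = Gz + h with G a real m×n matrix and h ∈ ℝᵐ; let φ > 0 and set L_φ(z,μ) := f(z) + ⟨μ, Gz + h⟩ − (φ/2)‖μ‖². For step sizes ε₁, ε₂ > 0 define T̂(z,μ) := ( P_Z(z − ε₁(∇f(z) + Gᵀμ)), P₊(μ + ε₂(Gz + h − φμ)) ), where P_Z and P₊ are the nearest-point projections onto Z and ℝᵐ₊. Then there exist ε̄₁, ε̄₂ > 0 such that for every ε₁ ∈ (0, ε̄₁] and ε₂ ∈ (0, ε̄₂]: T̂ is a contraction with respect to the weighted Euclidean norm ‖(z,μ)‖_w := (‖z‖²/ε₁ + ‖μ‖²/ε₂)^{1/2}; consequently T̂ has a unique fixed point y*, and for any initial y(0) ∈ ℝⁿ × ℝᵐ the iterates y(k+1) := T̂(y(k)) converge geometrically to y*, i.e. there exist C ≥ 0 and Δ ∈ (0,1) with ‖y(k)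 − y*‖ ≤ C Δᵏ for all k. -/

import Mathlib

set_option maxHeartbeats 1000000




open scoped InnerProductSpace Matrix

section Aux


lemma proj_nonexpansive {F : Type*} [NormedAddCommGroup F] [InnerProductSpace ℝ F]
    {K : Set F} (hK : Convex ℝ K) {P : F → F}
    (hP : ∀ x, P x ∈ K ∧ ∀ y ∈ K, ‖x - P x‖ ≤ ‖x - y‖) (x y : F) :
    ‖P x - P y‖ ≤ ‖x - y‖ := by
  have key : ∀ u, ∀ w ∈ K, ⟪u - P u, w - P u⟫_ℝ ≤ 0 := by
    intro u w hw
    have hmem := (hP u).1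
    haveI : Nonempty K := ⟨⟨P u, hmem⟩⟩
    have heq : ‖u - P u‖ = ⨅ w : K, ‖u - w‖ := by
      refine le_antisymm (le_ciInf fun w => (hP u).2 w w.2)
        (ciInf_le (⟨0, fun _ ⟨w, hw⟩ => hw ▸ norm_nonneg _⟩ : BddBelow (Set.range fun w : K => ‖u - w‖)) ⟨P u, hmem⟩)
    exact (norm_eq_iInf_iff_real_inner_le_zero hK hmem).1 heq w hw
  have h1 := key x (P y) (hP y).1
  have h2 := key y (P x) (hP x).1
  have hdecomp : x - y = (x - P x) + (P x - P y) + (P y - y) := by abel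
  have hsum : ‖P x - P y‖ ^ 2 ≤ ⟪x - y, P x - P y⟫_ℝ := by
    have e1 : ⟪x - y, P x - P y⟫_ℝ
        = ⟪x - P x, P x - P y⟫_ℝ + ⟪P x - P y, P x - P y⟫_ℝ + ⟪P y - y, P x - P y⟫_ℝ := by
      rw [hdecomp, inner_add_left, inner_add_left]
    have e2 : ⟪x - P x, P x - P y⟫_ℝ = -⟪x - P x, P y - P x⟫_ℝ := by
      rw [← inner_neg_right]; congr 1; abel
    have e3 : ⟪P y - y, P x - P y⟫_ℝ = -⟪y - P y, P x - P y⟫_ℝ := by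
      rw [← inner_neg_left]; congr 1; abel
    have e4 : ⟪P x - P y, P x - P y⟫_ℝ = ‖P x - P y‖ ^ 2 := real_inner_self_eq_norm_sq _
    rw [e1, e2, e3, e4]; linarith
  have hcs : ⟪x - y, P x - P y⟫_ℝ ≤ ‖x - y‖ * ‖P x - P y‖ := real_inner_le_norm _ _
  nlinarith [norm_nonneg (P x - P y), norm_nonneg (x - y)]

lemma orthant_convex {m : ℕ} : Convex ℝ {v : EuclideanSpace ℝ (Fin m) | ∀ j, 0 ≤ v j} := by
  intro v hv w hw a b ha hb _
  intro j
  have : (a • v + b • w) j = a * v j + b * w j := rfl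
  rw [this]
  exact add_nonneg (mul_nonneg ha (hv j)) (mul_nonneg hb (hw j))

lemma adj_inner {n m : ℕ} (G : Matrix (Fin m) (Fin n) ℝ)
    (μ : EuclideanSpace ℝ (Fin m)) (z : EuclideanSpace ℝ (Fin n)) :
    ⟪Matrix.toEuclideanLin Gᵀ μ, z⟫_ℝ = ⟪μ, Matrix.toEuclideanLin G z⟫_ℝ := by
  have : Gᵀ = Gᴴ := by ext i j; simp [Matrix.conjTranspose]
  rw [this, Matrix.toEuclideanLin_conjTranspose_eq_adjoint]
  exact LinearMap.adjoint_inner_left _ _ _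

lemma core_ineq {E F : Type*} [NormedAddCommGroup E] [InnerProductSpace ℝ E]
    [NormedAddCommGroup F] [InnerProductSpace ℝ F]
    (dz df : E) (dμ : F)
    (gl : E →ₗ[ℝ] F) (gTl : F →ₗ[ℝ] E)
    (hadj : ∀ (μ : F) (z : E), ⟪gTl μ, z⟫_ℝ = ⟪μ, gl z⟫_ℝ)
    (c φ L M ε₁ ε₂ : ℝ) (hc : 0 < c) (hφ : 0 < φ) (hM : 0 ≤ M)
    (hε₁ : 0 < ε₁) (hε₂ : 0 < ε₂)
    (hmono : c * ‖dz‖ ^ 2 ≤ ⟪df, dz⟫_ℝ)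
    (hlip : ‖df‖ ≤ L * ‖dz‖)
    (hgl : ‖gl dz‖ ≤ M * ‖dz‖) (hgTl : ‖gTl dμ‖ ≤ M * ‖dμ‖)
    (hcon1 : ε₁ * L ^ 2 + ε₂ * M ^ 2 ≤ c / 2) (hcon2 : ε₁ * M ^ 2 + ε₂ * φ ^ 2 ≤ φ / 2) :
    ‖dz - ε₁ • (df + gTl dμ)‖ ^ 2 / ε₁ + ‖dμ + ε₂ • (gl dz - φ • dμ)‖ ^ 2 / ε₂
      ≤ max (1 - c * ε₁) (1 - φ * ε₂) * (‖dz‖ ^ 2 / ε₁ + ‖dμ‖ ^ 2 / ε₂) := by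
  set u := ‖dz‖ ^ 2 with hu
  set v := ‖dμ‖ ^ 2 with hv
  have hu0 : 0 ≤ u := sq_nonneg _
  have hv0 : 0 ≤ v := sq_nonneg _
  set p := ⟪dz, df⟫_ℝ with hp'
  set q := ⟪dμ, gl dz⟫_ℝ with hq'
  set W1 := ‖df + gTl dμ‖ ^ 2 with hW1'
  set W2 := ‖gl dz - φ • dμ‖ ^ 2 with hW2'
  have hq : ⟪dz, gTl dμ⟫_ℝ = q := by rw [real_inner_comm]; exact hadj dμ dz
  have expand1 : ‖dz - ε₁ • (df + gTl dμ)‖ ^ 2 = u - 2 * (ε₁ * (p + q)) + ε₁ ^ 2 * W1 := by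
    rw [norm_sub_sq_real, real_inner_smul_right, inner_add_right, norm_smul,
      Real.norm_eq_abs, mul_pow, sq_abs, hq]
  have expand2 : ‖dμ + ε₂ • (gl dz - φ • dμ)‖ ^ 2 = v + 2 * (ε₂ * (q - φ * v)) + ε₂ ^ 2 * W2 := by
    rw [norm_add_sq_real, real_inner_smul_right, inner_sub_right, real_inner_smul_right,
      real_inner_self_eq_norm_sq, norm_smul, Real.norm_eq_abs, mul_pow, sq_abs]
  have hp : c * u ≤ p := by rw [hp', real_inner_comm]; exact hmono
  have hlip0 : 0 ≤ L * ‖dz‖ := le_trans (norm_nonneg df) hlip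
  have hW1 : W1 ≤ 2 * (L ^ 2 * u) + 2 * (M ^ 2 * v) := by
    have h := norm_add_le df (gTl dμ)
    have h2 : ‖df + gTl dμ‖ ≤ L * ‖dz‖ + M * ‖dμ‖ := by
      refine h.trans (add_le_add hlip hgTl)
    nlinarith [norm_nonneg (df + gTl dμ), sq_nonneg (L * ‖dz‖ - M * ‖dμ‖),
      mul_nonneg hM (norm_nonneg dμ)]
  have hW2 : W2 ≤ 2 * (M ^ 2 * u) + 2 * (φ ^ 2 * v) := by
    have h := norm_sub_le (gl dz) (φ • dμ)
    have hφd : ‖φ • dμ‖ = φ * ‖dμ‖ := by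
      rw [norm_smul, Real.norm_eq_abs, abs_of_pos hφ]
    have h2 : ‖gl dz - φ • dμ‖ ≤ M * ‖dz‖ + φ * ‖dμ‖ := by
      rw [hφd] at h; exact h.trans (add_le_add hgl le_rfl)
    nlinarith [norm_nonneg (gl dz - φ • dμ), sq_nonneg (M * ‖dz‖ - φ * ‖dμ‖),
      mul_nonneg hM (norm_nonneg dz), mul_nonneg hφ.le (norm_nonneg dμ)]
  rw [expand1, expand2]
  set A := u - 2 * (ε₁ * (p + q)) + ε₁ ^ 2 * W1 with hA
  set B := v + 2 * (ε₂ * (q - φ * v)) + ε₂ ^ 2 * W2 with hB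
  have key : A * ε₂ + B * ε₁ ≤ ((1 - c * ε₁) * u) * ε₂ + ((1 - φ * ε₂) * v) * ε₁ := by
    have m1 : ε₁ ^ 2 * ε₂ * W1 ≤ ε₁ ^ 2 * ε₂ * (2 * (L ^ 2 * u) + 2 * (M ^ 2 * v)) :=
      mul_le_mul_of_nonneg_left hW1 (by positivity)
    have m2 : ε₁ * ε₂ ^ 2 * W2 ≤ ε₁ * ε₂ ^ 2 * (2 * (M ^ 2 * u) + 2 * (φ ^ 2 * v)) :=
      mul_le_mul_of_nonneg_left hW2 (by positivity)
    have m3 : ε₁ * ε₂ * (c * u) ≤ ε₁ * ε₂ * p :=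
      mul_le_mul_of_nonneg_left hp (by positivity)
    have m4 : ε₁ * ε₂ * ((ε₁ * L ^ 2 + ε₂ * M ^ 2) * u) ≤ ε₁ * ε₂ * ((c / 2) * u) :=
      mul_le_mul_of_nonneg_left (mul_le_mul_of_nonneg_right hcon1 hu0) (by positivity)
    have m5 : ε₁ * ε₂ * ((ε₁ * M ^ 2 + ε₂ * φ ^ 2) * v) ≤ ε₁ * ε₂ * ((φ / 2) * v) :=
      mul_le_mul_of_nonneg_left (mul_le_mul_of_nonneg_right hcon2 hv0) (by positivity)
    nlinarith [m1, m2, m3, m4, m5]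
  have hDiv : A / ε₁ + B / ε₂ ≤ (1 - c * ε₁) * u / ε₁ + (1 - φ * ε₂) * v / ε₂ := by
    rw [div_add_div _ _ (ne_of_gt hε₁) (ne_of_gt hε₂),
      div_add_div _ _ (ne_of_gt hε₁) (ne_of_gt hε₂)]
    refine (div_le_div_iff_of_pos_right (mul_pos hε₁ hε₂)).mpr ?_
    linarith [key]
  refine hDiv.trans ?_
  rw [mul_add]
  have hmax1 : (1 - c * ε₁) ≤ max (1 - c * ε₁) (1 - φ * ε₂) := le_max_left _ _
  have hmax2 : (1 - φ * ε₂) ≤ max (1 - c * ε₁) (1 - φ * ε₂) := le_max_right _ _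
  rw [mul_div_assoc, mul_div_assoc]
  exact add_le_add (mul_le_mul_of_nonneg_right hmax1 (by positivity))
    (mul_le_mul_of_nonneg_right hmax2 (by positivity))

end Aux

/-- The primal-dual projected gradient operator
`T̂(z,μ) = (P_Z(z − ε₁(∇f(z) + Gᵀμ)), P₊(μ + ε₂(Gz + h − φμ)))`. -/
noncomputable def primalDualMap {n m : ℕ}
    (PZ : EuclideanSpace ℝ (Fin n) → EuclideanSpace ℝ (Fin n))
    (Pp : EuclideanSpace ℝ (Fin m) → EuclideanSpace ℝ (Fin m))
    (f' : EuclideanSpace ℝ (Fin n) → EuclideanSpace ℝ (Fin n))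
    (G : Matrix (Fin m) (Fin n) ℝ) (h : EuclideanSpace ℝ (Fin m)) (φ ε₁ ε₂ : ℝ)
    (y : EuclideanSpace ℝ (Fin n) × EuclideanSpace ℝ (Fin m)) :
    EuclideanSpace ℝ (Fin n) × EuclideanSpace ℝ (Fin m) :=
  (PZ (y.1 - ε₁ • (f' y.1 + Matrix.toEuclideanLin Gᵀ y.2)),
   Pp (y.2 + ε₂ • (Matrix.toEuclideanLin G y.1 + h - φ • y.2)))

/-- The weighted Euclidean norm `‖(z,μ)‖_w = (‖z‖²/ε₁ + ‖μ‖²/ε₂)^{1/2}`. -/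
noncomputable def wNorm {n m : ℕ} (ε₁ ε₂ : ℝ)
    (y : EuclideanSpace ℝ (Fin n) × EuclideanSpace ℝ (Fin m)) : ℝ :=
  Real.sqrt (‖y.1‖ ^ 2 / ε₁ + ‖y.2‖ ^ 2 / ε₂)

/-- for small enough step sizes the primal-dual projected gradient operator
of the regularized Lagrangian is a contraction in the weighted norm; hence it has a unique
fixed point and its iterates converge geometrically to it. -/
theorem primalDual_contraction {n m : ℕ}
    (Z : Set (EuclideanSpace ℝ (Fin n)))
    (hZne : Z.Nonempty) (hZcomp : IsCompact Z) (hZconv : Convex ℝ Z)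
    (f : EuclideanSpace ℝ (Fin n) → ℝ)
    (f' : EuclideanSpace ℝ (Fin n) → EuclideanSpace ℝ (Fin n))
    (hf : ∀ x, HasGradientAt f (f' x) x)
    (c L : ℝ) (hc : 0 < c)
    (hmono : ∀ x y, c * ‖x - y‖ ^ 2 ≤ ⟪f' x - f' y, x - y⟫_ℝ)
    (hlip : ∀ x y, ‖f' x - f' y‖ ≤ L * ‖x - y‖)
    (G : Matrix (Fin m) (Fin n) ℝ) (h : EuclideanSpace ℝ (Fin m))
    (φ : ℝ) (hφ : 0 < φ)
    -- nearest-point projections onto Z and onto the nonnegative orthant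
    (PZ : EuclideanSpace ℝ (Fin n) → EuclideanSpace ℝ (Fin n))
    (hPZ : ∀ x, PZ x ∈ Z ∧ ∀ y ∈ Z, ‖x - PZ x‖ ≤ ‖x - y‖)
    (Pp : EuclideanSpace ℝ (Fin m) → EuclideanSpace ℝ (Fin m))
    (hPp : ∀ x, (∀ j, 0 ≤ Pp x j) ∧
      ∀ y : EuclideanSpace ℝ (Fin m), (∀ j, 0 ≤ y j) → ‖x - Pp x‖ ≤ ‖x - y‖) :
    ∃ ε₁max > (0:ℝ), ∃ ε₂max > (0:ℝ), ∀ ε₁ ε₂ : ℝ,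
      0 < ε₁ → ε₁ ≤ ε₁max → 0 < ε₂ → ε₂ ≤ ε₂max →
      (∃ Δ : ℝ, 0 ≤ Δ ∧ Δ < 1 ∧
        ∀ y y' : EuclideanSpace ℝ (Fin n) × EuclideanSpace ℝ (Fin m),
          wNorm ε₁ ε₂ (primalDualMap PZ Pp f' G h φ ε₁ ε₂ y -
              primalDualMap PZ Pp f' G h φ ε₁ ε₂ y') ≤ Δ * wNorm ε₁ ε₂ (y - y')) ∧
      (∃ ys : EuclideanSpace ℝ (Fin n) × EuclideanSpace ℝ (Fin m),
        primalDualMap PZ Pp f' G h φ ε₁ ε₂ ys = ys ∧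
        (∀ y', primalDualMap PZ Pp f' G h φ ε₁ ε₂ y' = y' → y' = ys) ∧
        ∀ y0 : EuclideanSpace ℝ (Fin n) × EuclideanSpace ℝ (Fin m),
          ∃ C : ℝ, 0 ≤ C ∧ ∃ Δ : ℝ, 0 < Δ ∧ Δ < 1 ∧
            ∀ k : ℕ, wNorm ε₁ ε₂ ((primalDualMap PZ Pp f' G h φ ε₁ ε₂)^[k] y0 - ys) ≤
              C * Δ ^ k) := by
  classical
  -- nonexpansiveness of the two projections
  have hPZne : ∀ a b, ‖PZ a - PZ b‖ ≤ ‖a - b‖ := proj_nonexpansive hZconv hPZ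
  have hPpne : ∀ a b, ‖Pp a - Pp b‖ ≤ ‖a - b‖ :=
    proj_nonexpansive orthant_convex (fun x => ⟨(hPp x).1, fun y hy => (hPp x).2 y hy⟩)
  -- linear maps and operator norm bound
  set gl : EuclideanSpace ℝ (Fin n) →ₗ[ℝ] EuclideanSpace ℝ (Fin m) := Matrix.toEuclideanLin G
    with hgl'
  set gTl : EuclideanSpace ℝ (Fin m) →ₗ[ℝ] EuclideanSpace ℝ (Fin n) := Matrix.toEuclideanLin Gᵀ
    with hgTl'
  set M : ℝ := max ‖LinearMap.toContinuousLinearMap gl‖ ‖LinearMap.toContinuousLinearMap gTl‖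
    with hM'
  have hM : 0 ≤ M := le_trans (norm_nonneg _) (le_max_left _ _)
  have hgl : ∀ z, ‖gl z‖ ≤ M * ‖z‖ := by
    intro z
    have h1 := (LinearMap.toContinuousLinearMap gl).le_opNorm z
    rw [LinearMap.coe_toContinuousLinearMap'] at h1
    exact h1.trans (mul_le_mul_of_nonneg_right (le_max_left _ _) (norm_nonneg _))
  have hgTl : ∀ w, ‖gTl w‖ ≤ M * ‖w‖ := by
    intro w
    have h1 := (LinearMap.toContinuousLinearMap gTl).le_opNorm w
    rw [LinearMap.coe_toContinuousLinearMap'] at h1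
    exact h1.trans (mul_le_mul_of_nonneg_right (le_max_right _ _) (norm_nonneg _))
  have hadj : ∀ (μ : EuclideanSpace ℝ (Fin m)) (z : EuclideanSpace ℝ (Fin n)),
      ⟪gTl μ, z⟫_ℝ = ⟪μ, gl z⟫_ℝ := adj_inner G
  -- step size bounds
  refine ⟨min (min (c / (4 * (L ^ 2 + 1))) (φ / (4 * (M ^ 2 + 1)))) (1 / (2 * c)),
    by positivity,
    min (min (c / (4 * (M ^ 2 + 1))) (φ / (4 * (φ ^ 2 + 1)))) (1 / (2 * φ)),
    by positivity, ?_⟩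
  intro ε₁ ε₂ hε₁ hε₁le hε₂ hε₂le
  have e1 : ε₁ * (4 * (L ^ 2 + 1)) ≤ c :=
    (le_div_iff₀ (by positivity)).1 (hε₁le.trans ((min_le_left _ _).trans (min_le_left _ _)))
  have e2 : ε₁ * (4 * (M ^ 2 + 1)) ≤ φ :=
    (le_div_iff₀ (by positivity)).1 (hε₁le.trans ((min_le_left _ _).trans (min_le_right _ _)))
  have e3 : ε₂ * (4 * (M ^ 2 + 1)) ≤ c :=
    (le_div_iff₀ (by positivity)).1 (hε₂le.trans ((min_le_left _ _).trans (min_le_left _ _)))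
  have e4 : ε₂ * (4 * (φ ^ 2 + 1)) ≤ φ :=
    (le_div_iff₀ (by positivity)).1 (hε₂le.trans ((min_le_left _ _).trans (min_le_right _ _)))
  have e5 : ε₁ * (2 * c) ≤ 1 :=
    (le_div_iff₀ (by positivity)).1 (hε₁le.trans (min_le_right _ _))
  have e6 : ε₂ * (2 * φ) ≤ 1 :=
    (le_div_iff₀ (by positivity)).1 (hε₂le.trans (min_le_right _ _))
  have hcon1 : ε₁ * L ^ 2 + ε₂ * M ^ 2 ≤ c / 2 := by nlinarith
  have hcon2 : ε₁ * M ^ 2 + ε₂ * φ ^ 2 ≤ φ / 2 := by nlinarith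
  set D : ℝ := max (1 - c * ε₁) (1 - φ * ε₂) with hD'
  have hD0 : 0 < D := lt_of_lt_of_le (by nlinarith) (le_max_left _ _)
  have hD1 : D < 1 := max_lt (by nlinarith) (by nlinarith)
  set Δ : ℝ := Real.sqrt D with hΔ'
  have hΔ0 : 0 ≤ Δ := Real.sqrt_nonneg _
  have hΔpos : 0 < Δ := Real.sqrt_pos.2 hD0
  have hΔ1 : Δ < 1 := by
    nlinarith [Real.sq_sqrt hD0.le, Real.sqrt_nonneg D]
  set T := primalDualMap PZ Pp f' G h φ ε₁ ε₂ with hT'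
  -- the contraction estimate
  have hcontr : ∀ y y', wNorm ε₁ ε₂ (T y - T y') ≤ Δ * wNorm ε₁ ε₂ (y - y') := by
    intro y y'
    have hfst : (T y - T y').1 = PZ (y.1 - ε₁ • (f' y.1 + gTl y.2))
        - PZ (y'.1 - ε₁ • (f' y'.1 + gTl y'.2)) := rfl
    have hsnd : (T y - T y').2 = Pp (y.2 + ε₂ • (gl y.1 + h - φ • y.2))
        - Pp (y'.2 + ε₂ • (gl y'.1 + h - φ • y'.2)) := rfl
    have hsub1 : (y.1 - ε₁ • (f' y.1 + gTl y.2)) - (y'.1 - ε₁ • (f' y'.1 + gTl y'.2))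
        = (y.1 - y'.1) - ε₁ • ((f' y.1 - f' y'.1) + gTl (y.2 - y'.2)) := by
      rw [map_sub]; module
    have hsub2 : (y.2 + ε₂ • (gl y.1 + h - φ • y.2)) - (y'.2 + ε₂ • (gl y'.1 + h - φ • y'.2))
        = (y.2 - y'.2) + ε₂ • (gl (y.1 - y'.1) - φ • (y.2 - y'.2)) := by
      rw [map_sub]; module
    have hmain := core_ineq (y.1 - y'.1) (f' y.1 - f' y'.1) (y.2 - y'.2) gl gTl hadj
      c φ L M ε₁ ε₂ hc hφ hM hε₁ hε₂ (hmono y.1 y'.1) (hlip y.1 y'.1)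
      (hgl (y.1 - y'.1)) (hgTl (y.2 - y'.2)) hcon1 hcon2
    have step1 : wNorm ε₁ ε₂ (T y - T y')
        ≤ Real.sqrt (D * (‖(y - y').1‖ ^ 2 / ε₁ + ‖(y - y').2‖ ^ 2 / ε₂)) := by
      apply Real.sqrt_le_sqrt
      rw [hfst, hsnd]
      have b1 : ‖PZ (y.1 - ε₁ • (f' y.1 + gTl y.2)) - PZ (y'.1 - ε₁ • (f' y'.1 + gTl y'.2))‖ ^ 2
          ≤ ‖(y.1 - y'.1) - ε₁ • ((f' y.1 - f' y'.1) + gTl (y.2 - y'.2))‖ ^ 2 := by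
        rw [← hsub1]
        exact pow_le_pow_left₀ (norm_nonneg _) (hPZne _ _) 2
      have b2 : ‖Pp (y.2 + ε₂ • (gl y.1 + h - φ • y.2)) -
            Pp (y'.2 + ε₂ • (gl y'.1 + h - φ • y'.2))‖ ^ 2
          ≤ ‖(y.2 - y'.2) + ε₂ • (gl (y.1 - y'.1) - φ • (y.2 - y'.2))‖ ^ 2 := by
        rw [← hsub2]
        exact pow_le_pow_left₀ (norm_nonneg _) (hPpne _ _) 2
      have hyy1 : (y - y').1 = y.1 - y'.1 := rfl
      have hyy2 : (y - y').2 = y.2 - y'.2 := rfl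
      rw [hyy1, hyy2]
      have c1 : ‖PZ (y.1 - ε₁ • (f' y.1 + gTl y.2)) - PZ (y'.1 - ε₁ • (f' y'.1 + gTl y'.2))‖ ^ 2 / ε₁
          ≤ ‖(y.1 - y'.1) - ε₁ • ((f' y.1 - f' y'.1) + gTl (y.2 - y'.2))‖ ^ 2 / ε₁ := by gcongr
      have c2 : ‖Pp (y.2 + ε₂ • (gl y.1 + h - φ • y.2)) -
            Pp (y'.2 + ε₂ • (gl y'.1 + h - φ • y'.2))‖ ^ 2 / ε₂
          ≤ ‖(y.2 - y'.2) + ε₂ • (gl (y.1 - y'.1) - φ • (y.2 - y'.2))‖ ^ 2 / ε₂ := by gcongr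
      exact le_trans (add_le_add c1 c2) hmain
    rw [Real.sqrt_mul hD0.le] at step1
    exact step1
  refine ⟨⟨Δ, hΔ0, hΔ1, hcontr⟩, ?_⟩
  -- norm comparisons
  have hlow : ∀ Y : EuclideanSpace ℝ (Fin n) × EuclideanSpace ℝ (Fin m),
      ‖Y‖ ≤ Real.sqrt (max ε₁ ε₂) * wNorm ε₁ ε₂ Y := by
    intro Y
    rw [Prod.norm_def, wNorm, ← Real.sqrt_mul (le_trans hε₁.le (le_max_left _ _))]
    have key : ∀ (a : ℝ), a = ‖Y.1‖ ∨ a = ‖Y.2‖ →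
        a ≤ Real.sqrt (max ε₁ ε₂ * (‖Y.1‖ ^ 2 / ε₁ + ‖Y.2‖ ^ 2 / ε₂)) := by
      intro a ha
      have ha0 : 0 ≤ a := by rcases ha with rfl | rfl <;> exact norm_nonneg _
      rw [← Real.sqrt_sq ha0]
      apply Real.sqrt_le_sqrt
      have h1 : ‖Y.1‖ ^ 2 = ε₁ * (‖Y.1‖ ^ 2 / ε₁) := by field_simp
      have h2 : ‖Y.2‖ ^ 2 = ε₂ * (‖Y.2‖ ^ 2 / ε₂) := by field_simp
      have d1 : 0 ≤ ‖Y.1‖ ^ 2 / ε₁ := by positivity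
      have d2 : 0 ≤ ‖Y.2‖ ^ 2 / ε₂ := by positivity
      have hm1 : ε₁ ≤ max ε₁ ε₂ := le_max_left _ _
      have hm2 : ε₂ ≤ max ε₁ ε₂ := le_max_right _ _
      have t1 : ε₁ * (‖Y.1‖ ^ 2 / ε₁) ≤ max ε₁ ε₂ * (‖Y.1‖ ^ 2 / ε₁) :=
        mul_le_mul_of_nonneg_right hm1 d1
      have t2 : ε₂ * (‖Y.2‖ ^ 2 / ε₂) ≤ max ε₁ ε₂ * (‖Y.2‖ ^ 2 / ε₂) :=
        mul_le_mul_of_nonneg_right hm2 d2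
      have t3 : 0 ≤ max ε₁ ε₂ * (‖Y.2‖ ^ 2 / ε₂) := mul_nonneg (le_trans hε₁.le hm1) d2
      have t4 : 0 ≤ max ε₁ ε₂ * (‖Y.1‖ ^ 2 / ε₁) := mul_nonneg (le_trans hε₁.le hm1) d1
      rcases ha with rfl | rfl
      · rw [mul_add]; linarith [t1, t3, h1.le, h1.ge]
      · rw [mul_add]; linarith [t2, t4, h2.le, h2.ge]
    exact max_le (key _ (Or.inl rfl)) (key _ (Or.inr rfl))
  have hup : ∀ Y : EuclideanSpace ℝ (Fin n) × EuclideanSpace ℝ (Fin m),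
      wNorm ε₁ ε₂ Y ≤ Real.sqrt (1 / ε₁ + 1 / ε₂) * ‖Y‖ := by
    intro Y
    rw [wNorm, ← Real.sqrt_sq (norm_nonneg Y), ← Real.sqrt_mul (by positivity)]
    apply Real.sqrt_le_sqrt
    have h1 : ‖Y.1‖ ^ 2 ≤ ‖Y‖ ^ 2 := pow_le_pow_left₀ (norm_nonneg _) (norm_fst_le Y) 2
    have h2 : ‖Y.2‖ ^ 2 ≤ ‖Y‖ ^ 2 := pow_le_pow_left₀ (norm_nonneg _) (norm_snd_le Y) 2
    have e : (1 / ε₁ + 1 / ε₂) * ‖Y‖ ^ 2 = ‖Y‖ ^ 2 / ε₁ + ‖Y‖ ^ 2 / ε₂ := by ring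
    rw [e]
    exact add_le_add (by gcongr) (by gcongr)
  have hw0 : ∀ Y : EuclideanSpace ℝ (Fin n) × EuclideanSpace ℝ (Fin m), 0 ≤ wNorm ε₁ ε₂ Y := fun Y => Real.sqrt_nonneg _
  -- continuity of T
  have hTlip : ∀ p q : EuclideanSpace ℝ (Fin n) × EuclideanSpace ℝ (Fin m), ‖T p - T q‖ ≤
      (Real.sqrt (max ε₁ ε₂) * Δ * Real.sqrt (1 / ε₁ + 1 / ε₂)) * ‖p - q‖ := by
    intro p q
    calc ‖T p - T q‖ ≤ Real.sqrt (max ε₁ ε₂) * wNorm ε₁ ε₂ (T p - T q) := hlow _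
      _ ≤ Real.sqrt (max ε₁ ε₂) * (Δ * wNorm ε₁ ε₂ (p - q)) :=
          mul_le_mul_of_nonneg_left (hcontr p q) (Real.sqrt_nonneg _)
      _ ≤ Real.sqrt (max ε₁ ε₂) * (Δ * (Real.sqrt (1 / ε₁ + 1 / ε₂) * ‖p - q‖)) := by
          have := hup (p - q)
          gcongr
      _ = _ := by ring
  have hTcont : Continuous T := by
    have : LipschitzWith ((Real.sqrt (max ε₁ ε₂) * Δ * Real.sqrt (1 / ε₁ + 1 / ε₂)).toNNReal) T := by
      apply LipschitzWith.of_dist_le_mul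
      intro p q
      rw [dist_eq_norm, dist_eq_norm]
      refine (hTlip p q).trans (mul_le_mul_of_nonneg_right ?_ (norm_nonneg _))
      exact Real.le_coe_toNNReal _
    exact this.continuous
  -- existence of the fixed point via Cauchy sequence
  set y0 : EuclideanSpace ℝ (Fin n) × EuclideanSpace ℝ (Fin m) := 0 with hy0'
  have hstep : ∀ k : ℕ, wNorm ε₁ ε₂ (T^[k+1] y0 - T^[k] y0) ≤ Δ ^ k * wNorm ε₁ ε₂ (T y0 - y0) := by
    intro k
    induction k with
    | zero => simp
    | succ k ih =>
      rw [Function.iterate_succ_apply' T (k+1), Function.iterate_succ_apply' T k]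
      calc wNorm ε₁ ε₂ (T (T (T^[k] y0)) - T (T^[k] y0))
          ≤ Δ * wNorm ε₁ ε₂ (T (T^[k] y0) - T^[k] y0) := hcontr _ _
        _ = Δ * wNorm ε₁ ε₂ (T^[k+1] y0 - T^[k] y0) := by
            rw [Function.iterate_succ_apply' T k]
        _ ≤ Δ * (Δ ^ k * wNorm ε₁ ε₂ (T y0 - y0)) := mul_le_mul_of_nonneg_left ih hΔ0
        _ = Δ ^ (k+1) * wNorm ε₁ ε₂ (T y0 - y0) := by ring
  have hcauchy : CauchySeq (fun k => T^[k] y0) := by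
    apply cauchySeq_of_le_geometric Δ (Real.sqrt (max ε₁ ε₂) * wNorm ε₁ ε₂ (T y0 - y0)) hΔ1
    intro k
    rw [dist_eq_norm, norm_sub_rev]
    calc ‖T^[k+1] y0 - T^[k] y0‖
        ≤ Real.sqrt (max ε₁ ε₂) * wNorm ε₁ ε₂ (T^[k+1] y0 - T^[k] y0) := hlow _
      _ ≤ Real.sqrt (max ε₁ ε₂) * (Δ ^ k * wNorm ε₁ ε₂ (T y0 - y0)) :=
          mul_le_mul_of_nonneg_left (hstep k) (Real.sqrt_nonneg _)
      _ = Real.sqrt (max ε₁ ε₂) * wNorm ε₁ ε₂ (T y0 - y0) * Δ ^ k := by ring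
  obtain ⟨ys, hys⟩ := cauchySeq_tendsto_of_complete hcauchy
  have hfix : T ys = ys := by
    have h1 : Filter.Tendsto (fun k => T^[k+1] y0) Filter.atTop (nhds ys) :=
      hys.comp (Filter.tendsto_add_atTop_nat 1)
    have h2 : Filter.Tendsto (fun k => T (T^[k] y0)) Filter.atTop (nhds (T ys)) :=
      (hTcont.tendsto ys).comp hys
    have heq : (fun k => T (T^[k] y0)) = fun k => T^[k+1] y0 :=
      funext fun k => (Function.iterate_succ_apply' T k y0).symm
    rw [heq] at h2
    exact tendsto_nhds_unique h2 h1
  have hwzero : ∀ Y : EuclideanSpace ℝ (Fin n) × EuclideanSpace ℝ (Fin m),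
      wNorm ε₁ ε₂ Y = 0 → Y = 0 := by
    intro Y hY
    have := hlow Y
    rw [hY, mul_zero] at this
    exact norm_le_zero_iff.1 this
  refine ⟨ys, hfix, ?_, ?_⟩
  · intro y' hy'
    have h1 := hcontr y' ys
    rw [hy', hfix] at h1
    have h2 : wNorm ε₁ ε₂ (y' - ys) = 0 := le_antisymm (by nlinarith [hw0 (y' - ys)]) (hw0 _)
    have := hwzero _ h2
    exact sub_eq_zero.1 this
  · intro y0'
    refine ⟨wNorm ε₁ ε₂ (y0' - ys), hw0 _, Δ, hΔpos, hΔ1, ?_⟩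
    intro k
    induction k with
    | zero => simp
    | succ k ih =>
      rw [Function.iterate_succ_apply' T k]
      calc wNorm ε₁ ε₂ (T (T^[k] y0') - ys)
          = wNorm ε₁ ε₂ (T (T^[k] y0') - T ys) := by rw [hfix]
        _ ≤ Δ * wNorm ε₁ ε₂ (T^[k] y0' - ys) := hcontr _ _
        _ ≤ Δ * (wNorm ε₁ ε₂ (y0' - ys) * Δ ^ k) := mul_le_mul_of_nonneg_left ih hΔ0
        _ = wNorm ε₁ ε₂ (y0' - ys) * Δ ^ (k+1) := by ring
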